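/- More generally, if X and Y are connected linearly ordered topological spaces, then every continuum-preserving function f : X → Y is connectedness-preserving. -/

import Mathlib

open Set

lemma lub_aux_ccp {X : Type*} [LinearOrder X] [TopologicalSpace X] [OrderTopology X]
    [PreconnectedSpace X] {s : Set X} (hne : s.Nonempty) (hbdd : BddAbove s) :
    ∃ x, IsLUB s x := by
  by_contra h
  push_neg at h
  have hU : IsOpen (upperBounds s) := by
    rw [isOpen_iff_mem_nhds]
    intro x hx
    obtain ⟨b, hb, hbx⟩ : ∃ b ∈ upperBounds s, b < x := by
      by_contra hc
      push_neg at hc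
      exact h x ⟨hx, fun b hb => hc b hb⟩
    exact Filter.mem_of_superset (isOpen_Ioi.mem_nhds hbx)
      (fun y hy z hz => (hb hz).trans (le_of_lt hy))
  have hV : IsOpen (upperBounds s)ᶜ := by
    rw [isOpen_iff_mem_nhds]
    intro x hx
    obtain ⟨y, hy, hxy⟩ : ∃ y ∈ s, x < y := by
      by_contra hc
      push_neg at hc
      exact hx fun y hy => hc y hy
    exact Filter.mem_of_superset (isOpen_Iio.mem_nhds hxy)
      (fun w hw hws => absurd (hws hy) (not_le.2 hw))
  have hVne : ((upperBounds s)ᶜ).Nonempty := by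
    by_contra hc
    obtain ⟨y, hy⟩ := hne
    refine h y ⟨?_, fun b hb => hb hy⟩
    by_contra hy'
    exact hc ⟨y, hy'⟩
  obtain ⟨x, -, hx1, hx2⟩ := isPreconnected_univ (upperBounds s) (upperBounds s)ᶜ hU hV
    (by rw [union_compl_self])
    (let ⟨b, hb⟩ := hbdd; ⟨b, mem_univ b, hb⟩)
    (let ⟨v, hv⟩ := hVne; ⟨v, mem_univ v, hv⟩)
  exact hx2 hx1

lemma glb_aux_ccp {X : Type*} [LinearOrder X] [TopologicalSpace X] [OrderTopology X]
    [PreconnectedSpace X] {s : Set X} (hne : s.Nonempty) (hbdd : BddBelow s) :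
    ∃ x, IsGLB s x := by
  obtain ⟨y, hy⟩ := hne
  obtain ⟨x, hx⟩ := lub_aux_ccp (s := lowerBounds s) hbdd ⟨y, fun b hb => hb hy⟩
  exact ⟨x, fun z hz => hx.2 fun b hb => hb hz, fun b hb => hx.1 hb⟩

lemma dense_aux_ccp {X : Type*} [LinearOrder X] [TopologicalSpace X] [OrderTopology X]
    [PreconnectedSpace X] (a b : X) (hab : a < b) : ∃ c, a < c ∧ c < b := by
  by_contra h
  push_neg at h
  obtain ⟨x, -, h1, h2⟩ := isPreconnected_univ (Iio b) (Ioi a) isOpen_Iio isOpen_Ioi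
    (fun x _ => (lt_or_ge x b).imp id fun h' => lt_of_lt_of_le hab h')
    ⟨a, mem_univ a, hab⟩ ⟨b, mem_univ b, hab⟩
  exact absurd (h x h2) (not_le.2 h1)

section
variable {X : Type*} [LinearOrder X] [TopologicalSpace X] [OrderTopology X]
    [PreconnectedSpace X] [Nonempty X]

open Classical in
noncomputable def mySup_ccp (s : Set X) : X :=
  if h : s.Nonempty ∧ BddAbove s then (lub_aux_ccp h.1 h.2).choose else Classical.arbitrary X

open Classical in
noncomputable def myInf_ccp (s : Set X) : X :=
  if h : s.Nonempty ∧ BddBelow s then (glb_aux_ccp h.1 h.2).choose else Classical.arbitrary X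

lemma isLUB_mySup_ccp {s : Set X} (h1 : s.Nonempty) (h2 : BddAbove s) :
    IsLUB s (mySup_ccp s) := by
  rw [mySup_ccp, dif_pos ⟨h1, h2⟩]
  exact (lub_aux_ccp h1 h2).choose_spec

lemma isGLB_myInf_ccp {s : Set X} (h1 : s.Nonempty) (h2 : BddBelow s) :
    IsGLB s (myInf_ccp s) := by
  rw [myInf_ccp, dif_pos ⟨h1, h2⟩]
  exact (glb_aux_ccp h1 h2).choose_spec

lemma mySup_ccp_of_not_bddAbove {s : Set X} (hs : ¬BddAbove s) :
    mySup_ccp s = mySup_ccp (∅ : Set X) := by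
  rw [mySup_ccp, mySup_ccp, dif_neg (by simp [hs]), dif_neg (by simp)]

lemma myInf_ccp_of_not_bddBelow {s : Set X} (hs : ¬BddBelow s) :
    myInf_ccp s = myInf_ccp (∅ : Set X) := by
  rw [myInf_ccp, myInf_ccp, dif_neg (by simp [hs]), dif_neg (by simp)]

end

theorem continuumP_implies_connP_LOTS {X Y : Type*}
    [LinearOrder X] [TopologicalSpace X] [OrderTopology X] [ConnectedSpace X]
    [LinearOrder Y] [TopologicalSpace Y] [OrderTopology Y] [ConnectedSpace Y]
    (f : X → Y)
    (hcp : ∀ K : Set X, IsCompact K → IsConnected K →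
      IsCompact (f '' K) ∧ IsConnected (f '' K)) :
    ∀ A : Set X, IsConnected A → IsConnected (f '' A) := by
  have hnX : Nonempty X := inferInstance
  letI supSet : SupSet X := ⟨mySup_ccp⟩
  letI infSet : InfSet X := ⟨myInf_ccp⟩
  have hsSup : ∀ s : Set X, s.Nonempty → BddAbove s → IsLUB s (sSup s) :=
    fun s h1 h2 => isLUB_mySup_ccp h1 h2
  have hsInf : ∀ s : Set X, s.Nonempty → BddBelow s → IsGLB s (sInf s) :=
    fun s h1 h2 => isGLB_myInf_ccp h1 h2
  letI ccl : ConditionallyCompleteLinearOrder X :=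
    { (inferInstance : Lattice X), (inferInstance : LinearOrder X), supSet, infSet with
      isLUB_csSup := hsSup
      isGLB_csInf := hsInf
      csSup_of_not_bddAbove := fun s hs => mySup_ccp_of_not_bddAbove hs
      csInf_of_not_bddBelow := fun s hs => myInf_ccp_of_not_bddBelow hs }
  haveI : DenselyOrdered X := ⟨fun a b hab => dense_aux_ccp a b hab⟩
  intro A ⟨⟨x0, hx0⟩, hA⟩
  refine ⟨⟨f x0, mem_image_of_mem f hx0⟩, isPreconnected_of_forall_pair ?_⟩
  rintro _ ⟨a, ha, rfl⟩ _ ⟨b, hb, rfl⟩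
  refine ⟨f '' uIcc a b, image_mono (hA.ordConnected.uIcc_subset ha hb),
    mem_image_of_mem f left_mem_uIcc, mem_image_of_mem f right_mem_uIcc, ?_⟩
  exact (hcp (uIcc a b) isCompact_uIcc ⟨⟨a, left_mem_uIcc⟩, isPreconnected_uIcc⟩).2.2
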